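/- Let D ⊆ Z^n (n ≥ 2) be a finite set with 0 ∉ D, and let R = max over u ∈ D and coordinates k of |u^(k)|. Define M to be the n×n integer matrix with 1's on the diagonal, R+1 on the superdiagonal, entry (1,1) equal to 1+(R+1)^2, and entry (2,1) equal to R+1, all other entries 0. Then M is unimodular, and for every u ∈ D, the vector Mu has some coordinate of absolute value greater than R; hence Mu ∉ D. -/

import Mathlib

theorem shear_matrix_escapes {n : ℕ} (hn : 2 ≤ n) (D : Finset (Fin n → ℤ))
    (h0 : (0 : Fin n → ℤ) ∉ D)
    (R : ℕ) (hR : R = D.sup fun u => Finset.univ.sup fun k => (u k).natAbs)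
    (M : Matrix (Fin n) (Fin n) ℤ)
    (hM : M = Matrix.of fun i j : Fin n =>
      if (i : ℕ) = 0 ∧ (j : ℕ) = 0 then 1 + ((R : ℤ) + 1) ^ 2
      else if (i : ℕ) = 1 ∧ (j : ℕ) = 0 then (R : ℤ) + 1
      else if i = j then 1
      else if (j : ℕ) = (i : ℕ) + 1 then (R : ℤ) + 1
      else 0) :
    (M.det = 1 ∨ M.det = -1) ∧
    (∀ u ∈ D, ∃ k, (R : ℤ) < |M.mulVec u k|) ∧
    (∀ u ∈ D, M.mulVec u ∉ D) := by
  -- bound lemma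
  have hbound : ∀ u ∈ D, ∀ j, |u j| ≤ (R : ℤ) := by
    intro u hu j
    have h2 : (Finset.univ.sup fun k => (u k).natAbs) ≤
        D.sup fun u => Finset.univ.sup fun k => (u k).natAbs :=
      Finset.le_sup (f := fun v => Finset.univ.sup fun k => (v k).natAbs) hu
    have h1 : (u j).natAbs ≤ Finset.univ.sup fun k => (u k).natAbs :=
      Finset.le_sup (f := fun k => (u k).natAbs) (Finset.mem_univ j)
    have h3 : (u j).natAbs ≤ R := by rw [hR]; exact le_trans h1 h2
    rw [Int.abs_eq_natAbs]
    exact_mod_cast h3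
  clear hR
  have hn0 : 0 < n := by omega
  have hn1 : 1 < n := by omega
  set i0 : Fin n := ⟨0, hn0⟩ with hi0
  set i1 : Fin n := ⟨1, hn1⟩ with hi1
  have hne01 : i0 ≠ i1 := by simp [hi0, hi1, Fin.ext_iff]
  -- determinant
  have hdet : M.det = 1 := by
    set U : Matrix (Fin n) (Fin n) ℤ := Matrix.of fun i j : Fin n =>
      if i = j then 1 else if (j : ℕ) = (i : ℕ) + 1 then (R : ℤ) + 1 else 0 with hU
    have hfac : M = U * Matrix.transvection i1 i0 ((R : ℤ) + 1) := by
      ext i j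
      rw [Matrix.transvection, Matrix.mul_add, Matrix.mul_one, hM]
      by_cases hj : j = i0
      · subst hj
        rw [Matrix.add_apply, Matrix.mul_single_apply_same]
        simp only [Matrix.of_apply, hU, hi0, hi1, Fin.ext_iff, Fin.val_mk, and_true, true_and]
        split_ifs <;> first | ring1 | (exfalso; omega) | simp_all
      · rw [Matrix.add_apply, Matrix.mul_single_apply_of_ne (hbj := hj)]
        have hj0 : (j : ℕ) ≠ 0 := by
          intro h; exact hj (Fin.ext h)
        simp only [Matrix.of_apply, hU, add_zero, Fin.ext_iff]
        split_ifs <;> first | ring1 | (exfalso; omega) | simp_all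
    rw [hfac, Matrix.det_mul, Matrix.det_transvection_of_ne _ _
        (fun h => hne01 h.symm) _, mul_one, Matrix.det_of_upperTriangular]
    · simp [hU]
    · intro i j hij
      have hij' : (j : ℕ) < (i : ℕ) := hij
      simp only [hU, Matrix.of_apply, Fin.ext_iff]
      split_ifs <;> first | rfl | ring1 | omega | simp_all
  -- escape
  have key : ∀ u ∈ D, ∃ k, (R : ℤ) < |M.mulVec u k| := by
    intro u hu
    have hune : u ≠ 0 := fun h => h0 (h ▸ hu)
    have hex : (Finset.univ.filter fun j => u j ≠ 0).Nonempty := by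
      by_contra h
      apply hune
      funext j
      by_contra hj
      exact h ⟨j, Finset.mem_filter.2 ⟨Finset.mem_univ j, hj⟩⟩
    set k : Fin n := (Finset.univ.filter fun j => u j ≠ 0).min' hex with hk
    have hk0 : u k ≠ 0 :=
      (Finset.mem_filter.1 ((Finset.univ.filter fun j => u j ≠ 0).min'_mem hex)).2
    have hkmin : ∀ j : Fin n, (j : ℕ) < (k : ℕ) → u j = 0 := by
      intro j hj
      by_contra hja
      have hjm : j ∈ Finset.univ.filter fun j => u j ≠ 0 :=
        Finset.mem_filter.2 ⟨Finset.mem_univ j, hja⟩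
      have h5 := Finset.min'_le _ j hjm
      rw [← hk] at h5
      have h6 : (k : ℕ) ≤ (j : ℕ) := h5
      omega
    have huk : 1 ≤ |u k| := Int.one_le_abs (by omega)
    by_cases hkz : (k : ℕ) = 0
    · -- k = 0 case
      refine ⟨i0, ?_⟩
      have hXval : M.mulVec u i0
          = (1 + ((R : ℤ) + 1) ^ 2) * u i0 + ((R : ℤ) + 1) * u i1 := by
        rw [Matrix.mulVec, dotProduct]
        rw [← Finset.sum_subset (Finset.subset_univ ({i0, i1} : Finset (Fin n)))]
        · rw [Finset.sum_pair hne01, hM]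
          simp only [Matrix.of_apply, hi0, hi1, Fin.ext_iff, Fin.val_mk, and_true, true_and]
          norm_num
        · intro x _ hx
          simp only [Finset.mem_insert, Finset.mem_singleton] at hx
          push_neg at hx
          have hx0 : (x : ℕ) ≠ 0 := by
            intro h; exact hx.1 (Fin.ext h)
          have hx1 : (x : ℕ) ≠ 1 := by
            intro h; exact hx.2 (Fin.ext h)
          rw [hM]
          simp only [Matrix.of_apply, hi0, hi1, Fin.ext_iff, Fin.val_mk, and_true, true_and]
          split_ifs <;> first | ring1 | (exfalso; omega) | simp_all
      have hk' : k = i0 := Fin.ext hkz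
      have ha : 1 ≤ |u i0| := hk' ▸ huk
      have hb : |u i1| ≤ (R : ℤ) := hbound u hu _
      rw [hXval]
      have haux := abs_add_le ((1 + ((R : ℤ) + 1) ^ 2) * u i0 + ((R : ℤ) + 1) * u i1)
        (-(((R : ℤ) + 1) * u i1))
      rw [add_neg_cancel_right, abs_neg, abs_mul, abs_mul] at haux
      have hc2 : |(1 + ((R : ℤ) + 1) ^ 2)| = 1 + ((R : ℤ) + 1) ^ 2 := abs_of_nonneg (by positivity)
      have hc3 : |((R : ℤ) + 1)| = (R : ℤ) + 1 := abs_of_nonneg (by positivity)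
      rw [hc2, hc3] at haux
      have e1 : (1 + ((R : ℤ) + 1) ^ 2) * 1 ≤ (1 + ((R : ℤ) + 1) ^ 2) * |u i0| :=
        mul_le_mul_of_nonneg_left ha (by positivity)
      have e2 : ((R : ℤ) + 1) * |u i1| ≤ ((R : ℤ) + 1) * (R : ℤ) :=
        mul_le_mul_of_nonneg_left hb (by positivity)
      linarith
    · -- k ≥ 1 case
      have hik : (k : ℕ) - 1 < n := by omega
      refine ⟨⟨(k : ℕ) - 1, hik⟩, ?_⟩
      set i : Fin n := ⟨(k : ℕ) - 1, hik⟩ with hi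
      have hival : (i : ℕ) = (k : ℕ) - 1 := rfl
      have hXval : M.mulVec u i = ((R : ℤ) + 1) * u k := by
        rw [Matrix.mulVec, dotProduct]
        rw [Finset.sum_eq_single k]
        · rw [hM]
          simp only [Matrix.of_apply]
          have h1 : ¬((i : ℕ) = 0 ∧ (k : ℕ) = 0) := by omega
          have h2 : ¬((i : ℕ) = 1 ∧ (k : ℕ) = 0) := by omega
          have h3 : i ≠ k := by
            intro h; apply_fun Fin.val at h; omega
          have h4 : (k : ℕ) = (i : ℕ) + 1 := by omega
          rw [if_neg h1, if_neg h2, if_neg h3, if_pos h4]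
        · intro b _ hb
          by_cases hbk : (b : ℕ) < (k : ℕ)
          · rw [hkmin b hbk, mul_zero]
          · have hbk0 : (b : ℕ) ≠ (k : ℕ) := fun h => hb (Fin.ext h)
            have hbk' : (i : ℕ) + 1 < (b : ℕ) := by omega
            rw [hM]
            simp only [Matrix.of_apply, Fin.ext_iff]
            split_ifs <;> first | ring1 | (exfalso; omega) | simp_all
        · intro h; exact absurd (Finset.mem_univ k) h
      rw [hXval, abs_mul]
      have hc3 : |((R : ℤ) + 1)| = (R : ℤ) + 1 := abs_of_nonneg (by positivity)
      rw [hc3]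
      have e2 : ((R : ℤ) + 1) * 1 ≤ ((R : ℤ) + 1) * |u k| :=
        mul_le_mul_of_nonneg_left huk (by positivity)
      linarith
  refine ⟨Or.inl hdet, key, ?_⟩
  intro u hu hmem
  obtain ⟨k, hk⟩ := key u hu
  exact absurd (hbound _ hmem k) (not_le.2 hk)
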